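/- Let k be a positive integer and p, p' ∈ P_k. Then d(id_k, p∘p') ≤ d(id_k, p) + d(id_k, p') − (k + nc(p∘p') − nc(p) − nc(p'))/2 − κ(p,p'); equivalently, the ≺-defect η(p,p') is nonnegative. -/

import Mathlib

open Sum
open scoped Classical

noncomputable section

namespace PartitionPaper

variable {X : Type*}

/-- The number of blocks of a partition of `X`, encoded as a setoid on `X`. -/
def nc (p : Setoid X) : ℕ := Nat.card (Quotient p)

/-- The geodesic distance `d(p,p') = (nc p + nc p')/2 - nc (p ⊔ p')`. -/
def pdist (p q : Setoid X) : ℚ :=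
  ((nc p : ℚ) + (nc q : ℚ)) / 2 - (nc (p ⊔ q) : ℚ)

/-- Geodesic order with base partition `b` : `p' ≤_b p`. -/
def geoLE (b p' p : Setoid X) : Prop := pdist b p' + pdist p' p = pdist b p

/-- Coarser-compatible order `p' ⊣_b p` : `p'` coarser than `p` and
`nc (p' ⊔ b) = nc (p ⊔ b)`.  (In the setoid lattice, `p ≤ p'` means `p` is finer.) -/
def coarserComp (b p' p : Setoid X) : Prop :=
  p ≤ p' ∧ nc (p' ⊔ b) = nc (p ⊔ b)

/-- Finer-compatible order `p' ⊐_b p` : `p'` finer than `p` and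
`nc p' - nc (p' ⊔ b) = nc p - nc (p ⊔ b)`. -/
def finerComp (b p' p : Setoid X) : Prop :=
  p' ≤ p ∧ (nc p' : ℤ) - (nc (p' ⊔ b) : ℤ) = (nc p : ℤ) - (nc (p ⊔ b) : ℤ)

/-- `p'` is obtained from `p` by gluing two blocks of `p` into one. -/
def IsGluing (p p' : Setoid X) : Prop := p ≤ p' ∧ nc p' + 1 = nc p

/-- The Cayley graph on partitions of `X`: an edge iff one partition is obtained
from the other by gluing two of its blocks into one. -/
def glueGraph (X : Type*) : SimpleGraph (Setoid X) where
  Adj p q := IsGluing p q ∨ IsGluing q p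
  symm := ⟨fun _ _ h => Or.elim h Or.inr Or.inl⟩
  loopless := by
    constructor
    intro p h
    rcases h with ⟨-, h⟩ | ⟨-, h⟩ <;> omega

/-- The segment `[p₁, p₂]` for the geodesic distance. -/
def seg (p₁ p₂ : Setoid X) : Set (Setoid X) :=
  {p | pdist p₁ p + pdist p p₂ = pdist p₁ p₂}

/-- The defect of `p'` from being on `[b, p]`. -/
def df (b p' p : Setoid X) : ℚ := pdist b p' + pdist p' p - pdist b p

/-- Admissible one-step splits: `p'` is obtained by cutting a (pivotal) block of `p`
into two blocks in such a way that the join with `b` gains one block. -/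
def Delta (b p : Setoid X) : Set (Setoid X) :=
  {p' | p' ≤ p ∧ nc p' = nc p + 1 ∧ nc (p' ⊔ b) = nc (p ⊔ b) + 1}

/-- The admissible splits `Sp_b(p) = ⋃ₘ Δ_b^m(p)`. -/
def Sp (b p : Setoid X) : Set (Setoid X) :=
  {p' | Relation.ReflTransGen (fun u v => v ∈ Delta b u) p p'}

/-- The admissible gluings `Gl_b(p)`: partitions obtained by gluing blocks of `p`
without altering the number of blocks of the join with `b`. -/
def Gl (b p : Setoid X) : Set (Setoid X) :=
  {p' | p ≤ p' ∧ nc (p' ⊔ b) = nc (p ⊔ b)}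

/-- `p'` is directly smaller than `p` for the relation `r`. -/
def DirectlySmaller (r : Setoid X → Setoid X → Prop) (p' p : Setoid X) : Prop :=
  r p' p ∧ p' ≠ p ∧ ¬ ∃ p'', p'' ≠ p ∧ p'' ≠ p' ∧ r p' p'' ∧ r p'' p

/-- The block of the partition `p` corresponding to a class `c`. -/
def blockSet (p : Setoid X) (c : Quotient p) : Set X := {x | Quotient.mk p x = c}

/-- The number of blocks of `q` contained in the block `c` of `p`. -/
def numSubBlocks (q p : Setoid X) (c : Quotient p) : ℕ :=
  Nat.card {d : Quotient q // blockSet q d ⊆ blockSet p c}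

/-- The number of blocks of `p` containing exactly `i` blocks of `q`. -/
def rcount (q p : Setoid X) (i : ℕ) : ℕ :=
  Nat.card {c : Quotient p // numSubBlocks q p c = i}

/-- The Möbius function of the refinement order:
`μ_f(q,p) = (-1)^(nc q - nc p) ∏_i ((i-1)!)^(r_i)` for `q` finer than `p`. -/
def muf (q p : Setoid X) : ℤ :=
  (-1) ^ (nc q - nc p) *
    ∏ i ∈ Finset.range (nc q + 1), ((Nat.factorial (i - 1) : ℤ)) ^ (rcount q p i)

/-- `P_k`: partitions of `{1,…,k} ∪ {1',…,k'}`, the left summand being the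
unprimed (top) row and the right summand the primed (bottom) row. -/
abbrev Pk (k : ℕ) := Setoid (Fin k ⊕ Fin k)

/-- The identity partition `id_k = {{i, i'} : 1 ≤ i ≤ k}`. -/
def idk (k : ℕ) : Pk k := Setoid.ker (Sum.elim id id)

/-- The permutation partition associated with `σ`, with blocks `{i, σ(i)'}`. -/
def permPartition {k : ℕ} (σ : Equiv.Perm (Fin k)) : Pk k :=
  Setoid.ker (Sum.elim id σ.symm)

/-- `S_k`, the set of permutation partitions. -/
def Sk (k : ℕ) : Set (Pk k) := Set.range (permPartition (k := k))

/-- `B_k`, the set of Brauer partitions: all blocks have exactly two elements. -/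
def Bk (k : ℕ) : Set (Pk k) := {p | ∀ x, Nat.card {y | p.r x y} = 2}

/-- Embedding of the top/bottom rows of the upper diagram `q` into the
three-row diagram (top ⊕ (middle ⊕ bottom)). -/
def upMap (k : ℕ) : Fin k ⊕ Fin k → Fin k ⊕ (Fin k ⊕ Fin k) :=
  Sum.elim Sum.inl (fun i => Sum.inr (Sum.inl i))

/-- Embedding of the top/bottom rows of the lower diagram `p` into the
three-row diagram. -/
def downMap (k : ℕ) : Fin k ⊕ Fin k → Fin k ⊕ (Fin k ⊕ Fin k) :=
  Sum.elim (fun i => Sum.inr (Sum.inl i)) (fun i => Sum.inr (Sum.inr i))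

/-- The partition of the three-row diagram obtained by stacking a diagram of `q`
on top of a diagram of `p` (identifying the bottom row of `q` with the top row
of `p`): the equivalence relation generated by the copies of `q` and `p`. -/
def stackSetoid {k : ℕ} (p q : Pk k) : Setoid (Fin k ⊕ (Fin k ⊕ Fin k)) :=
  sInf {s | ∀ x y,
    ((∃ a b, upMap k a = x ∧ upMap k b = y ∧ q.r a b) ∨
     (∃ a b, downMap k a = x ∧ downMap k b = y ∧ p.r a b)) → s.r x y}

/-- The composition `p ∘ q` (a diagram of `q` stacked above a diagram of `p`),
obtained by restricting the stacked partition to the outer rows. -/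
def comp {k : ℕ} (p q : Pk k) : Pk k :=
  Setoid.comap (Sum.elim Sum.inl (fun i => Sum.inr (Sum.inr i))) (stackSetoid p q)

/-- `κ(p,q)`: the number of connected components of the stacked diagram entirely
contained in the middle row. -/
def kappaP {k : ℕ} (p q : Pk k) : ℕ :=
  Nat.card {c : Quotient (stackSetoid p q) //
    ∀ x, Quotient.mk (stackSetoid p q) x = c → ∃ i : Fin k, x = Sum.inr (Sum.inl i)}

/-- The transpose `ᵗp`, exchanging the two rows. -/
def transpose {k : ℕ} (p : Pk k) : Pk k := Setoid.comap Sum.swap p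

/-- The disjoint-union partition on a sum type. -/
def sumSetoid {α β : Type*} (p : Setoid α) (q : Setoid β) : Setoid (α ⊕ β) :=
  Setoid.ker (Sum.map (Quotient.mk p) (Quotient.mk q))

/-- Reindexing of the rows for the tensor product. -/
def reindex (k l : ℕ) :
    Fin (k + l) ⊕ Fin (k + l) → (Fin k ⊕ Fin k) ⊕ (Fin l ⊕ Fin l) :=
  Sum.elim
    (fun j => Sum.elim (fun a => Sum.inl (Sum.inl a)) (fun b => Sum.inr (Sum.inl b))
      (finSumFinEquiv.symm j))
    (fun j => Sum.elim (fun a => Sum.inl (Sum.inr a)) (fun b => Sum.inr (Sum.inr b))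
      (finSumFinEquiv.symm j))

/-- The tensor product `p ⊗ q ∈ P_{k+l}`: a diagram of `p` placed to the left of
a diagram of `q`. -/
def tensor {k l : ℕ} (p : Pk k) (q : Pk l) : Pk (k + l) :=
  Setoid.comap (reindex k l) (sumSetoid p q)

/-- The `≺`-defect `η(p,q)`. -/
def eta {k : ℕ} (p q : Pk k) : ℚ :=
  pdist (idk k) p + pdist (idk k) q - pdist (idk k) (comp p q)
    - ((k : ℚ) + (nc (comp p q) : ℚ) - (nc p : ℚ) - (nc q : ℚ)) / 2 - (kappaP p q : ℚ)

/-- The Kreweras complement of `p'` in `p`: the set of `p''` with `p = p' ∘ p''`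
realizing equality in the `≺`-defect inequality. -/
def Krew {k : ℕ} (p p' : Pk k) : Set (Pk k) :=
  {p'' | comp p' p'' = p ∧ eta p' p'' = 0}

/-- `p' ≺ p` : `p'` is an admissible prefix of `p`. -/
def prec {k : ℕ} (p' p : Pk k) : Prop :=
  ∃ p'', comp p' p'' = p ∧ eta p' p'' = 0

/-- The partition of `{1,…,k}` into the orbits (cycles) of the permutation `σ`. -/
def cycleSetoid {k : ℕ} (σ : Equiv.Perm (Fin k)) : Setoid (Fin k) :=
  ⟨σ.SameCycle,
    ⟨fun x => Equiv.Perm.SameCycle.refl σ x, fun h => h.symm, fun h₁ h₂ => h₁.trans h₂⟩⟩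

/-- A partition of `{1,…,k}` is non-crossing if there are no `a < b < c < d` with
`a, c` in one block and `b, d` in a different block. -/
def NonCrossing {k : ℕ} (π : Setoid (Fin k)) : Prop :=
  ¬ ∃ a b c d : Fin k, a < b ∧ b < c ∧ c < d ∧ π.r a c ∧ π.r b d ∧ ¬ π.r a b

/-- The map sending a permutation partition to the partition of `{1,…,k}` into
the orbits of the corresponding bijection (the blocks of `p ⊔ id_k` restricted
to the top row). -/
def orbitMap {k : ℕ} (p : Pk k) : Setoid (Fin k) :=
  Setoid.comap (Sum.inl : Fin k → Fin k ⊕ Fin k) (p ⊔ idk k)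

/-- The permutation `(1,k+1)(2,k+2)⋯(k,2k)` of `{1,…,2k}`. -/
def tauPerm (k : ℕ) : Equiv.Perm (Fin (k + k)) :=
  (finSumFinEquiv.symm.trans (Equiv.sumComm (Fin k) (Fin k))).trans finSumFinEquiv

/-- The left part of a partition in `P_{k₁+k₂}`. -/
def leftPart {k₁ k₂ : ℕ} (p : Pk (k₁ + k₂)) : Pk k₁ :=
  Setoid.comap (Sum.map (Fin.castAdd k₂) (Fin.castAdd k₂)) p

/-- The right part of a partition in `P_{k₁+k₂}`. -/
def rightPart {k₁ k₂ : ℕ} (p : Pk (k₁ + k₂)) : Pk k₂ :=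
  Setoid.comap (Sum.map (Fin.natAdd k₁) (Fin.natAdd k₁)) p

/-- The `p`-moment `m_p(E_N) = Tr_N(E_N ᵗp)/N^{nc(p ⊔ id_k)}
`= ∑_{p'} (E_N)_{p'} N^{nc(p ⊔ p') - nc(p ⊔ id_k)}`. -/
def momentF {k : ℕ} (E : ℕ → Pk k → ℂ) (p : Pk k) (N : ℕ) : ℂ :=
  ∑ᶠ p' : Pk k, E N p' * (N : ℂ) ^ ((nc (p ⊔ p') : ℤ) - (nc (p ⊔ idk k) : ℤ))

/-- The `p`-cumulant `κ_p(E_N) = N^{nc p - nc (p ⊔ id_k)} (E_N)_p`. -/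
def cumulantF {k : ℕ} (E : ℕ → Pk k → ℂ) (p : Pk k) (N : ℕ) : ℂ :=
  (N : ℂ) ^ ((nc p : ℤ) - (nc (p ⊔ idk k) : ℤ)) * E N p

section AuxStatement15
variable {Y α β : Type*}

lemma nc_anti [Finite Y] {u v : Setoid Y} (h : u ≤ v) : nc v ≤ nc u :=
  Nat.card_le_card_of_surjective (Setoid.map_of_le h)
    (by rintro ⟨x⟩; exact ⟨Quotient.mk u x, rfl⟩)

def atom (x y : Y) : Setoid Y :=
  ⟨fun u v => u = v ∨ ((u = x ∨ u = y) ∧ (v = x ∨ v = y)),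
   ⟨fun _ => Or.inl rfl, by intro a b h; tauto,
    by intro a b c h g; rcases h with rfl | h <;> rcases g with rfl | g <;> tauto⟩⟩

lemma atom_rel (x y : Y) : atom x y x y := Or.inr ⟨Or.inl rfl, Or.inr rfl⟩

lemma atom_le {e : Setoid Y} {x y : Y} (h : e x y) : atom x y ≤ e := by
  rintro a b (rfl | ⟨(rfl|rfl), (rfl|rfl)⟩)
  · exact e.refl _
  · exact e.refl _
  · exact h
  · exact e.symm h
  · exact e.refl _

/-- explicit description of `u ⊔ atom x y` -/
def atomJoin (u : Setoid Y) (x y : Y) : Setoid Y :=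
  ⟨fun a b => u a b ∨ (u a x ∧ u y b) ∨ (u a y ∧ u x b),
   ⟨fun a => Or.inl (u.refl a),
    by
      intro a b h
      rcases h with h | ⟨h1, h2⟩ | ⟨h1, h2⟩
      · exact Or.inl (u.symm h)
      · exact Or.inr (Or.inr ⟨u.symm h2, u.symm h1⟩)
      · exact Or.inr (Or.inl ⟨u.symm h2, u.symm h1⟩),
    by
      intro a b c hab hbc
      rcases hab with h | ⟨h1, h2⟩ | ⟨h1, h2⟩ <;>
        rcases hbc with g | ⟨g1, g2⟩ | ⟨g1, g2⟩
      · exact Or.inl (u.trans h g)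
      · exact Or.inr (Or.inl ⟨u.trans h g1, g2⟩)
      · exact Or.inr (Or.inr ⟨u.trans h g1, g2⟩)
      · exact Or.inr (Or.inl ⟨h1, u.trans h2 g⟩)
      · exact Or.inl (u.trans (u.trans (u.trans h1 (u.symm g1)) (u.symm h2)) g2)
      · exact Or.inl (u.trans h1 g2)
      · exact Or.inr (Or.inr ⟨h1, u.trans h2 g⟩)
      · exact Or.inl (u.trans h1 g2)
      · exact Or.inl (u.trans (u.trans (u.trans h1 (u.symm g1)) (u.symm h2)) g2)⟩⟩

lemma sup_atom (u : Setoid Y) (x y : Y) : u ⊔ atom x y = atomJoin u x y := by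
  apply le_antisymm
  · apply sup_le
    · intro a b h; exact Or.inl h
    · intro a b h
      rcases h with rfl | ⟨(rfl|rfl), (rfl|rfl)⟩
      · exact Or.inl (u.refl _)
      · exact Or.inl (u.refl _)
      · exact Or.inr (Or.inl ⟨u.refl _, u.refl _⟩)
      · exact Or.inr (Or.inr ⟨u.refl _, u.refl _⟩)
      · exact Or.inl (u.refl _)
  · rintro a b (h | ⟨h1, h2⟩ | ⟨h1, h2⟩)
    · exact (le_sup_left : u ≤ u ⊔ atom x y) h
    · exact (u ⊔ atom x y).trans ((le_sup_left : u ≤ u ⊔ atom x y) h1)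
        ((u ⊔ atom x y).trans ((le_sup_right : atom x y ≤ u ⊔ atom x y) (atom_rel x y))
          ((le_sup_left : u ≤ u ⊔ atom x y) h2))
    · exact (u ⊔ atom x y).trans ((le_sup_left : u ≤ u ⊔ atom x y) h1)
        ((u ⊔ atom x y).trans ((le_sup_right : atom x y ≤ u ⊔ atom x y)
          ((atom x y).symm (atom_rel x y)))
          ((le_sup_left : u ≤ u ⊔ atom x y) h2))

lemma nc_sup_atom [Finite Y] {u : Setoid Y} {x y : Y} (h : ¬ u x y) :
    nc (u ⊔ atom x y) + 1 = nc u := by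
  classical
  set t : Quotient u := Quotient.mk u y with ht
  have key : ∀ a b : Y, (u ⊔ atom x y) a b ↔ (atomJoin u x y) a b := by
    intro a b; rw [sup_atom]
  -- the map
  let F : {c : Quotient u // ¬ c = t} → Quotient (u ⊔ atom x y) :=
    fun c => Setoid.map_of_le le_sup_left c.1
  have hFbij : Function.Bijective F := by
    constructor
    · rintro ⟨c, hc⟩ ⟨d, hd⟩ hcd
      obtain ⟨a, rfl⟩ := Quotient.exists_rep c
      obtain ⟨b, rfl⟩ := Quotient.exists_rep d
      have : (u ⊔ atom x y) a b := Quotient.exact hcd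
      rw [key] at this
      rcases this with h' | ⟨h1, h2⟩ | ⟨h1, h2⟩
      · exact Subtype.ext (Quotient.sound h')
      · exact absurd (Quotient.sound (u.symm h2) : _ = t) hd
      · exact absurd (Quotient.sound h1 : _ = t) hc
    · rintro ⟨z⟩
      by_cases hz : u z y
      · refine ⟨⟨Quotient.mk u x, ?_⟩, ?_⟩
        · intro hxy; exact h (Quotient.exact hxy)
        · refine Quotient.sound (show (u ⊔ atom x y) x z from ?_)
          rw [key]
          exact Or.inr (Or.inl ⟨u.refl x, u.symm hz⟩)
      · refine ⟨⟨Quotient.mk u z, fun hzy => hz (Quotient.exact hzy)⟩, rfl⟩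
  have h1 : Nat.card {c : Quotient u // ¬ c = t} = nc (u ⊔ atom x y) :=
    Nat.card_eq_of_bijective F hFbij
  have h2 : Nat.card {c : Quotient u // c = t} + Nat.card {c : Quotient u // ¬ c = t}
      = nc u := by
    rw [← Nat.card_sum]
    exact Nat.card_congr (Equiv.sumCompl _)
  have h3 : Nat.card {c : Quotient u // c = t} = 1 := by
    haveI : Unique {c : Quotient u // c = t} :=
      ⟨⟨⟨t, rfl⟩⟩, fun a => Subtype.ext (a.2)⟩
    exact Nat.card_unique
  omega

lemma edge_submod [Finite Y] {a b : Setoid Y} (hba : b ≤ a) (x y : Y) :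
    nc a + nc (b ⊔ atom x y) ≤ nc (a ⊔ atom x y) + nc b := by
  by_cases hb : b x y
  · rw [sup_eq_left.mpr (atom_le hb), sup_eq_left.mpr (atom_le (hba hb))]
  · have h1 := nc_sup_atom hb
    by_cases ha : a x y
    · rw [sup_eq_left.mpr (atom_le ha)]; omega
    · have h2 := nc_sup_atom ha; omega

lemma submod_aux [Finite Y] :
    ∀ (n : ℕ) (a b e : Setoid Y), nc b = n → b ≤ a →
      nc a + nc (b ⊔ e) ≤ nc (a ⊔ e) + nc b := by
  intro n
  induction n using Nat.strong_induction_on with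
  | _ n IH =>
    intro a b e hn hba
    by_cases hsub : e ≤ b
    · rw [sup_eq_left.mpr hsub, sup_eq_left.mpr (hsub.trans hba)]
    · have hxy : ∃ x y, e x y ∧ ¬ b x y := by
        by_contra hc
        push_neg at hc
        exact hsub fun x y hh => hc x y hh
      obtain ⟨x, y, hex, hbxy⟩ := hxy
      have hg : atom x y ≤ e := atom_le hex
      have hlt : nc (b ⊔ atom x y) < n := by
        have := nc_sup_atom hbxy; omega
      have key := IH _ hlt (a ⊔ atom x y) (b ⊔ atom x y) e rfl
        (sup_le_sup_right hba _)
      rw [sup_assoc, sup_assoc, sup_eq_right.mpr hg] at key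
      have key2 := edge_submod hba x y
      omega

lemma submod [Finite Y] {a b : Setoid Y} (e : Setoid Y) (hba : b ≤ a) :
    nc a + nc (b ⊔ e) ≤ nc (a ⊔ e) + nc b :=
  submod_aux (nc b) a b e rfl hba
lemma sumSetoid_rel_inl {p : Setoid α} {q : Setoid β} {a b : α} :
    sumSetoid p q (inl a) (inl b) ↔ p a b := by
  show Sum.map _ _ (inl a) = Sum.map _ _ (inl b) ↔ _
  simp only [Sum.map_inl, inl.injEq]
  exact Quotient.eq

lemma sumSetoid_rel_inr {p : Setoid α} {q : Setoid β} {a b : β} :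
    sumSetoid p q (inr a) (inr b) ↔ q a b := by
  show Sum.map _ _ (inr a) = Sum.map _ _ (inr b) ↔ _
  simp only [Sum.map_inr, inr.injEq]
  exact Quotient.eq

lemma sumSetoid_rel_not {p : Setoid α} {q : Setoid β} {a : α} {b : β} :
    ¬ sumSetoid p q (inl a) (inr b) := by
  intro h
  have : Sum.map _ _ (inl a) = Sum.map _ _ (inr b) := h
  simp at this

lemma sumSetoid_mono {p p' : Setoid α} {q q' : Setoid β} (hp : p ≤ p') (hq : q ≤ q') :
    sumSetoid p q ≤ sumSetoid p' q' := by
  rintro (a | a) (b | b) h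
  · exact sumSetoid_rel_inl.mpr (hp (sumSetoid_rel_inl.mp h))
  · exact absurd h sumSetoid_rel_not
  · exact absurd ((sumSetoid p q).symm h) sumSetoid_rel_not
  · exact sumSetoid_rel_inr.mpr (hq (sumSetoid_rel_inr.mp h))

lemma sumSetoid_sup (p p' : Setoid α) (q q' : Setoid β) :
    sumSetoid p q ⊔ sumSetoid p' q' = sumSetoid (p ⊔ p') (q ⊔ q') := by
  apply le_antisymm
  · exact sup_le (sumSetoid_mono le_sup_left le_sup_left)
      (sumSetoid_mono le_sup_right le_sup_right)
  · have keyL : (p ⊔ p') ≤ Setoid.comap Sum.inl (sumSetoid p q ⊔ sumSetoid p' q') := by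
      apply sup_le
      · intro a b h
        exact (le_sup_left : sumSetoid p q ≤ _) (sumSetoid_rel_inl.mpr h)
      · intro a b h
        exact (le_sup_right : sumSetoid p' q' ≤ _) (sumSetoid_rel_inl.mpr h)
    have keyR : (q ⊔ q') ≤ Setoid.comap Sum.inr (sumSetoid p q ⊔ sumSetoid p' q') := by
      apply sup_le
      · intro a b h
        exact (le_sup_left : sumSetoid p q ≤ _) (sumSetoid_rel_inr.mpr h)
      · intro a b h
        exact (le_sup_right : sumSetoid p' q' ≤ _) (sumSetoid_rel_inr.mpr h)
    rintro (a | a) (b | b) h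
    · exact keyL (sumSetoid_rel_inl.mp h)
    · exact absurd h sumSetoid_rel_not
    · exact absurd ((sumSetoid (p ⊔ p') (q ⊔ q')).symm h) sumSetoid_rel_not
    · exact keyR (sumSetoid_rel_inr.mp h)

lemma nc_sumSetoid [Finite α] [Finite β] (p : Setoid α) (q : Setoid β) :
    nc (sumSetoid p q) = nc p + nc q := by
  have hs : Function.Surjective (Sum.map (Quotient.mk p) (Quotient.mk q)) :=
    Function.Surjective.sumMap Quotient.mk_surjective Quotient.mk_surjective
  rw [show nc (sumSetoid p q) = Nat.card (Quotient p ⊕ Quotient q) from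
    Nat.card_congr (Setoid.quotientKerEquivOfSurjective _ hs), Nat.card_sum]
  rfl

/-- comap along an equivalence, as an order isomorphism. -/
def comapOrderIso (e : α ≃ β) : Setoid β ≃o Setoid α where
  toFun r := Setoid.comap e r
  invFun r := Setoid.comap e.symm r
  left_inv r := Setoid.ext fun x y => by
    simp [Setoid.comap_rel]
  right_inv r := Setoid.ext fun x y => by
    simp [Setoid.comap_rel]
  map_rel_iff' := by
    intro r s
    constructor
    · intro h x y hxy
      have := h (x := e.symm x) (y := e.symm y)
        (by show r (e (e.symm x)) (e (e.symm y)); simpa using hxy)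
      simpa using (show s (e (e.symm x)) (e (e.symm y)) from this)
    · intro h x y hxy
      exact h hxy

lemma comap_equiv_sup (e : α ≃ β) (r s : Setoid β) :
    Setoid.comap e (r ⊔ s) = Setoid.comap e r ⊔ Setoid.comap e s :=
  (comapOrderIso e).map_sup r s

lemma nc_comap_equiv (e : α ≃ β) (r : Setoid β) : nc (Setoid.comap (⇑e) r) = nc r :=
  Nat.card_congr (Quotient.congr e fun _ _ => Iff.rfl)

lemma nc_bot : nc (⊥ : Setoid α) = Nat.card α :=
  Nat.card_congr ⟨Quotient.lift id fun _ _ h => h, Quotient.mk _,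
    by rintro ⟨x⟩; rfl, fun _ => rfl⟩
lemma nc_split [Finite Y] (s : Setoid Y) (P : Quotient s → Prop) :
    Nat.card {d : Quotient s // P d} + Nat.card {d : Quotient s // ¬ P d} = nc s := by
  classical
  rw [← Nat.card_sum]
  exact Nat.card_congr (Equiv.sumCompl _)

-- now the stack analysis
variable {k : ℕ}

/-- the three-row ground type -/
abbrev V (k : ℕ) := Fin k ⊕ (Fin k ⊕ Fin k)

def rho (k : ℕ) : V k ≃ (Fin k ⊕ Fin k) ⊕ Fin k := (Equiv.sumAssoc (Fin k) (Fin k) (Fin k)).symm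

def upSetoid (q : Pk k) : Setoid (V k) := Setoid.comap (⇑(rho k)) (sumSetoid q ⊥)

lemma rho_upMap (a : Fin k ⊕ Fin k) : rho k (upMap k a) = Sum.inl a := by
  cases a <;> rfl

lemma up_rel (q : Pk k) (a b : Fin k ⊕ Fin k) :
    upSetoid q (upMap k a) (upMap k b) ↔ q a b := by
  show sumSetoid q ⊥ (rho k (upMap k a)) (rho k (upMap k b)) ↔ q a b
  rw [rho_upMap, rho_upMap, sumSetoid_rel_inl]

lemma downMap_eq (a : Fin k ⊕ Fin k) : downMap k a = Sum.inr a := by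
  cases a <;> rfl

lemma stack_eq (p p' : Pk k) :
    stackSetoid p p' = upSetoid p' ⊔ sumSetoid ⊥ p := by
  apply le_antisymm
  · apply sInf_le
    rintro x y (⟨a, b, rfl, rfl, hq⟩ | ⟨a, b, rfl, rfl, hp⟩)
    · exact (le_sup_left : upSetoid p' ≤ _) ((up_rel p' a b).mpr hq)
    · rw [downMap_eq, downMap_eq]
      exact (le_sup_right : sumSetoid ⊥ p ≤ _) (sumSetoid_rel_inr.mpr hp)
  · apply sup_le
    · -- upSetoid p' ≤ stackSetoid
      apply le_sInf
      intro s0 hs0 x y hxy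
      have hxy' : sumSetoid p' ⊥ (rho k x) (rho k y) := hxy
      rcases x with i | (i | i) <;> rcases y with j | (j | j)
      · exact hs0 _ _ (Or.inl ⟨inl i, inl j, rfl, rfl, sumSetoid_rel_inl.mp hxy'⟩)
      · exact hs0 _ _ (Or.inl ⟨inl i, inr j, rfl, rfl, sumSetoid_rel_inl.mp hxy'⟩)
      · exact absurd hxy' sumSetoid_rel_not
      · exact hs0 _ _ (Or.inl ⟨inr i, inl j, rfl, rfl, sumSetoid_rel_inl.mp hxy'⟩)
      · exact hs0 _ _ (Or.inl ⟨inr i, inr j, rfl, rfl, sumSetoid_rel_inl.mp hxy'⟩)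
      · exact absurd hxy' sumSetoid_rel_not
      · exact absurd ((sumSetoid p' ⊥).symm hxy') sumSetoid_rel_not
      · exact absurd ((sumSetoid p' ⊥).symm hxy') sumSetoid_rel_not
      · have : i = j := sumSetoid_rel_inr.mp hxy'
        subst this
        exact s0.refl _
    · -- sumSetoid ⊥ p ≤ stackSetoid
      apply le_sInf
      intro s0 hs0 x y hxy
      rcases x with i | a <;> rcases y with j | b
      · have : i = j := sumSetoid_rel_inl.mp hxy
        subst this
        exact s0.refl _
      · exact absurd hxy sumSetoid_rel_not
      · exact absurd ((sumSetoid ⊥ p).symm hxy) sumSetoid_rel_not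
      · have hp : p a b := sumSetoid_rel_inr.mp hxy
        exact hs0 _ _ (Or.inr ⟨a, b, downMap_eq a, downMap_eq b, hp⟩)
/-- the outer-rows embedding -/
def fmap (k : ℕ) : Fin k ⊕ Fin k → V k := Sum.elim Sum.inl (fun i => Sum.inr (Sum.inr i))

lemma lemma_i (p p' : Pk k) : nc (comp p p') + kappaP p p' ≤ nc (stackSetoid p p') := by
  classical
  set s := stackSetoid p p' with hs
  have hsplit : Nat.card {d : Quotient s // ∀ x, Quotient.mk s x = d → ∃ i : Fin k, x = Sum.inr (Sum.inl i)}
      + Nat.card {d : Quotient s // ¬ ∀ x, Quotient.mk s x = d → ∃ i : Fin k, x = Sum.inr (Sum.inl i)}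
      = nc s := nc_split s _
  have hkappa : kappaP p p' = Nat.card {d : Quotient s //
      ∀ x, Quotient.mk s x = d → ∃ i : Fin k, x = Sum.inr (Sum.inl i)} := rfl
  have hne : ∀ x : Fin k ⊕ Fin k,
      ¬ ∀ z, Quotient.mk s z = Quotient.mk s (fmap k x) → ∃ i : Fin k, z = Sum.inr (Sum.inl i) := by
    intro x hall
    rcases hall (fmap k x) rfl with ⟨i, hi⟩
    cases x <;> simp [fmap] at hi
  have hinj : nc (comp p p') ≤ Nat.card {d : Quotient s //
      ¬ ∀ x, Quotient.mk s x = d → ∃ i : Fin k, x = Sum.inr (Sum.inl i)} := by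
    let G : Quotient (comp p p') → {d : Quotient s //
        ¬ ∀ x, Quotient.mk s x = d → ∃ i : Fin k, x = Sum.inr (Sum.inl i)} :=
      Quotient.lift (fun x => ⟨Quotient.mk s (fmap k x), hne x⟩)
        (fun x y h => Subtype.ext (Quotient.sound h))
    have hGinj : Function.Injective G := by
      intro z w hzw
      obtain ⟨x, rfl⟩ := Quotient.exists_rep z
      obtain ⟨y, rfl⟩ := Quotient.exists_rep w
      have hmk : Quotient.mk s (fmap k x) = Quotient.mk s (fmap k y) :=
        congrArg Subtype.val hzw
      have hrel : s (fmap k x) (fmap k y) := Quotient.exact hmk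
      exact Quotient.sound hrel
    exact Nat.card_le_card_of_injective G hGinj
  omega

lemma lemma_ii (p p' : Pk k) :
    nc (stackSetoid p p' ⊔ upSetoid (idk k) ⊔ sumSetoid ⊥ (idk k)) ≤
      nc (idk k ⊔ comp p p') := by
  classical
  set T := stackSetoid p p' ⊔ upSetoid (idk k) ⊔ sumSetoid ⊥ (idk k) with hT
  have heU : ∀ i : Fin k, T (Sum.inl i) (Sum.inr (Sum.inl i)) := by
    intro i
    refine (le_sup_left.trans' le_sup_right : upSetoid (idk k) ≤ T) ?_
    show sumSetoid (idk k) ⊥ (rho k (Sum.inl i)) (rho k (Sum.inr (Sum.inl i)))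
    exact sumSetoid_rel_inl.mpr rfl
  have heD : ∀ i : Fin k, T (Sum.inr (Sum.inl i)) (Sum.inr (Sum.inr i)) := by
    intro i
    exact (le_sup_right : sumSetoid ⊥ (idk k) ≤ T) (sumSetoid_rel_inr.mpr rfl)
  have hle : (idk k ⊔ comp p p') ≤ Setoid.comap (fmap k) T := by
    apply sup_le
    · rintro (i | i) (j | j) h
      · have : i = j := h
        subst this
        exact T.refl _
      · have : i = j := h
        subst this
        exact T.trans (heU i) (heD i)
      · have : i = j := h
        subst this
        exact T.symm (T.trans (heU i) (heD i))
      · have : i = j := h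
        subst this
        exact T.refl _
    · intro x y h
      exact (le_sup_left.trans le_sup_left : stackSetoid p p' ≤ T) h
  let ψ : Quotient (idk k ⊔ comp p p') → Quotient T :=
    Quotient.lift (fun x => Quotient.mk T (fmap k x))
      (fun x y h => Quotient.sound (hle h))
  have hψ : Function.Surjective ψ := by
    rintro ⟨v⟩
    rcases v with i | (i | i)
    · exact ⟨Quotient.mk _ (Sum.inl i), rfl⟩
    · exact ⟨Quotient.mk _ (Sum.inl i), Quotient.sound (heU i)⟩
    · exact ⟨Quotient.mk _ (Sum.inr i), rfl⟩
  exact Nat.card_le_card_of_surjective ψ hψ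

lemma lemma_iii (p p' : Pk k) :
    nc (stackSetoid p p') + nc (p' ⊔ idk k) + nc (p ⊔ idk k) ≤
      nc (stackSetoid p p' ⊔ upSetoid (idk k) ⊔ sumSetoid ⊥ (idk k)) + nc p' + nc p := by
  classical
  have hcard : Nat.card (Fin k) = k := by simp
  have hA : nc (upSetoid p') = nc p' + k := by
    rw [upSetoid, nc_comap_equiv, nc_sumSetoid, nc_bot, hcard]
  have hB : nc (sumSetoid (⊥ : Setoid (Fin k)) p) = k + nc p := by
    rw [nc_sumSetoid, nc_bot, hcard]
  have hAe : nc (upSetoid p' ⊔ upSetoid (idk k)) = nc (p' ⊔ idk k) + k := by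
    rw [upSetoid, upSetoid, ← comap_equiv_sup, sumSetoid_sup, sup_idem,
      nc_comap_equiv, nc_sumSetoid, nc_bot, hcard]
  have hBe : nc (sumSetoid (⊥ : Setoid (Fin k)) p ⊔ sumSetoid ⊥ (idk k)) =
      k + nc (p ⊔ idk k) := by
    rw [sumSetoid_sup, sup_idem, nc_sumSetoid, nc_bot, hcard]
  have sub1 := submod (a := upSetoid p' ⊔ sumSetoid ⊥ p) (b := upSetoid p')
    (upSetoid (idk k)) le_sup_left
  have sub2 := submod (a := upSetoid p' ⊔ sumSetoid ⊥ p ⊔ upSetoid (idk k))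
    (b := sumSetoid ⊥ p) (sumSetoid ⊥ (idk k)) (le_sup_left.trans' le_sup_right)
  rw [stack_eq]
  omega

lemma main_nat (p p' : Pk k) :
    nc (comp p p') + kappaP p p' + nc (idk k ⊔ p) + nc (idk k ⊔ p') ≤
      nc (idk k ⊔ comp p p') + nc p + nc p' := by
  have h1 := lemma_i p p'
  have h2 := lemma_ii p p'
  have h3 := lemma_iii p p'
  rw [sup_comm (idk k) p, sup_comm (idk k) p']
  omega
lemma nc_idk (k : ℕ) : nc (idk k) = k := by
  have hs : Function.Surjective (Sum.elim (id : Fin k → Fin k) id) := fun i => ⟨inl i, rfl⟩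
  rw [show nc (idk k) = Nat.card (Fin k) from
    Nat.card_congr (Setoid.quotientKerEquivOfSurjective _ hs)]
  simp


end AuxStatement15

/-- For all `p, p' ∈ P_k`,
`d(id_k, p∘p') ≤ d(id_k,p) + d(id_k,p') - (k + nc(p∘p') - nc p - nc p')/2 - κ(p,p')`;
equivalently, the `≺`-defect `η(p,p')` is nonnegative. -/
theorem statement15 (k : ℕ) (hk : 0 < k) (p p' : Pk k) :
    pdist (idk k) (comp p p') ≤
      pdist (idk k) p + pdist (idk k) p' -
        ((k : ℚ) + (nc (comp p p') : ℚ) - (nc p : ℚ) - (nc p' : ℚ)) / 2 -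
          (kappaP p p' : ℚ) ∧
    0 ≤ eta p p' := by
  have H := main_nat p p'
  have H' : (nc (comp p p') : ℚ) + (kappaP p p' : ℚ) + (nc (idk k ⊔ p) : ℚ)
      + (nc (idk k ⊔ p') : ℚ) ≤ (nc (idk k ⊔ comp p p') : ℚ) + (nc p : ℚ) + (nc p' : ℚ) := by
    exact_mod_cast H
  constructor
  · unfold pdist
    rw [nc_idk]
    linarith
  · unfold eta pdist
    rw [nc_idk]
    linarith



end PartitionPaper
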